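/- Let X_a = (1/5)[[3,-4,0],[4,3,0],[0,0,5]] and X_b = (1/5)[[5,0,0],[0,3,-4],[0,4,3]], and let t = (3,0,4) be a row vector. For any two words u, v over the alphabet {a,b}, if t·X_u = t·X_v then u = v, where X_w denotes the product X_{w_1}···X_{w_n} for a word w = w_1···w_n. -/
import Mathlib
open Matrix

/-- integer versions of the generator matrices (5 times the real ones) -/
def wordA (c : Bool) : Matrix (Fin 3) (Fin 3) ℤ :=
  if c then !![3, -4, 0; 4, 3, 0; 0, 0, 5] else !![5, 0, 0; 0, 3, -4; 0, 4, 3]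

def wordN (w : List Bool) : Fin 3 → ℤ :=
  Matrix.vecMul ![3, 0, 4] ((w.map wordA).prod)

lemma wordN_nil : wordN [] = ![3, 0, 4] := by
  simp [wordN]

lemma wordN_concat (w : List Bool) (c : Bool) :
    wordN (w ++ [c]) = Matrix.vecMul (wordN w) (wordA c) := by
  simp [wordN, Matrix.vecMul_vecMul]

lemma vecMul_wordA_true (v : Fin 3 → ℤ) :
    Matrix.vecMul v (wordA true) = ![3*v 0 + 4*v 1, -4*v 0 + 3*v 1, 5*v 2] := by
  funext i
  fin_cases i <;>
    simp [wordA, Matrix.vecMul, dotProduct, Fin.sum_univ_three, Matrix.vecHead, Matrix.vecTail] <;> ring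

lemma vecMul_wordA_false (v : Fin 3 → ℤ) :
    Matrix.vecMul v (wordA false) = ![5*v 0, 3*v 1 + 4*v 2, -4*v 1 + 3*v 2] := by
  funext i
  fin_cases i <;>
    simp [wordA, Matrix.vecMul, dotProduct, Fin.sum_univ_three, Matrix.vecHead, Matrix.vecTail] <;> ring

def mfive (w : List Bool) : Fin 3 → ZMod 5 := fun i => ((wordN w i : ℤ) : ZMod 5)

lemma mfive_concat_true (w : List Bool) :
    mfive (w ++ [true]) =
      ![3 * mfive w 0 + 4 * mfive w 1, -4 * mfive w 0 + 3 * mfive w 1, 5 * mfive w 2] := by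
  funext i
  fin_cases i <;> simp [mfive, wordN_concat, vecMul_wordA_true] <;> push_cast <;> ring

lemma mfive_concat_false (w : List Bool) :
    mfive (w ++ [false]) =
      ![5 * mfive w 0, 3 * mfive w 1 + 4 * mfive w 2, -4 * mfive w 1 + 3 * mfive w 2] := by
  funext i
  fin_cases i <;> simp [mfive, wordN_concat, vecMul_wordA_false] <;> push_cast <;> ring

def WInv (w : List Bool) : Prop :=
  (w = [] ∧ mfive w 0 = 3 ∧ mfive w 1 = 0 ∧ mfive w 2 = 4) ∨
  (w.getLast? = some true ∧ mfive w 0 ≠ 0 ∧ mfive w 1 = 2 * mfive w 0 ∧ mfive w 2 = 0) ∨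
  (w.getLast? = some false ∧ mfive w 1 ≠ 0 ∧ mfive w 0 = 0 ∧ mfive w 2 = 2 * mfive w 1)

lemma winv (w : List Bool) : WInv w := by
  induction w using List.reverseRecOn with
  | nil =>
      left
      refine ⟨rfl, ?_, ?_, ?_⟩ <;> simp [mfive, wordN_nil] <;> decide
  | append_singleton w c ih =>
      cases c
      · -- letter b = false
        right; right
        rw [mfive_concat_false]
        refine ⟨by simp, ?_, ?_, ?_⟩ <;> simp <;>
        · rcases ih with ⟨-, h0, h1, h2⟩ | ⟨-, hx, h1, h2⟩ | ⟨-, hy, h0, h2⟩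
          · try simp only [h0, h1, h2]
            decide
          · try simp only [h1, h2]
            revert hx; generalize mfive w 0 = x; revert x; decide
          · try simp only [h0, h2]
            revert hy; generalize mfive w 1 = y; revert y; decide
      · -- letter a = true
        right; left
        rw [mfive_concat_true]
        refine ⟨by simp, ?_, ?_, ?_⟩ <;> simp <;>
        · rcases ih with ⟨-, h0, h1, h2⟩ | ⟨-, hx, h1, h2⟩ | ⟨-, hy, h0, h2⟩
          · try simp only [h0, h1, h2]
            decide
          · try simp only [h1, h2]
            revert hx; generalize mfive w 0 = x; revert x; decide
          · try simp only [h0, h2]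
            revert hy; generalize mfive w 1 = y; revert y; decide

lemma mfive_ne_zero (w : List Bool) : mfive w 0 ≠ 0 ∨ mfive w 1 ≠ 0 := by
  rcases winv w with ⟨-, h0, -, -⟩ | ⟨-, hx, -, -⟩ | ⟨-, hy, -, -⟩
  · left; rw [h0]; decide
  · left; exact hx
  · right; exact hy

lemma vecMul_matSmul (a : ℝ) (v : Fin 3 → ℝ) (M : Matrix (Fin 3) (Fin 3) ℝ) :
    Matrix.vecMul v (a • M) = a • Matrix.vecMul v M := by
  funext i
  simp [Matrix.vecMul, dotProduct, Matrix.smul_apply, Finset.mul_sum,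
    Fin.sum_univ_three]
  ring

lemma wordA_map (c : Bool) :
    (wordA c).map (fun z : ℤ => (z : ℝ)) =
      if c then !![3, -4, 0; 4, 3, 0; 0, 0, 5] else !![5, 0, 0; 0, 3, -4; 0, 4, 3] := by
  cases c <;> · funext i j; fin_cases i <;> fin_cases j <;> simp [wordA, Matrix.vecHead, Matrix.vecTail]

lemma real_vecMul (Xa Xb : Matrix (Fin 3) (Fin 3) ℝ)
    (hXa : Xa = (1/5 : ℝ) • !![3, -4, 0; 4, 3, 0; 0, 0, 5])
    (hXb : Xb = (1/5 : ℝ) • !![5, 0, 0; 0, 3, -4; 0, 4, 3]) :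
    ∀ (w : List Bool) (v : Fin 3 → ℤ),
      Matrix.vecMul (fun i => ((v i : ℤ) : ℝ)) ((w.map (fun c => if c then Xa else Xb)).prod)
        = (1/5 : ℝ) ^ w.length •
            fun i => ((Matrix.vecMul v ((w.map wordA).prod)) i : ℝ) := by
  intro w
  induction w with
  | nil => intro v; simp [Matrix.vecMul_one]
  | cons c w ih =>
      intro v
      have hX : (if c then Xa else Xb) = (1/5 : ℝ) • (wordA c).map (fun z : ℤ => (z : ℝ)) := by
        rw [wordA_map]; cases c <;> simp [hXa, hXb]
      have hcast : Matrix.vecMul (fun i => ((v i : ℤ) : ℝ)) ((wordA c).map (fun z : ℤ => (z : ℝ)))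
          = fun i => ((Matrix.vecMul v (wordA c)) i : ℝ) := by
        funext i
        exact (RingHom.map_vecMul (Int.castRingHom ℝ) (wordA c) v i).symm
      rw [List.map_cons, List.prod_cons, ← Matrix.vecMul_vecMul, hX, vecMul_matSmul, hcast,
        Matrix.smul_vecMul, ih (Matrix.vecMul v (wordA c)), smul_smul,
        List.map_cons, List.prod_cons, List.length_cons]
      rw [Matrix.vecMul_vecMul]
      congr 1
      rw [pow_succ]
      ring

lemma cancel_letter (Xa Xb : Matrix (Fin 3) (Fin 3) ℝ)
    (hXa : Xa = (1/5 : ℝ) • !![3, -4, 0; 4, 3, 0; 0, 0, 5])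
    (hXb : Xb = (1/5 : ℝ) • !![5, 0, 0; 0, 3, -4; 0, 4, 3]) (c : Bool)
    (x y : Fin 3 → ℝ)
    (h : Matrix.vecMul x (if c then Xa else Xb) = Matrix.vecMul y (if c then Xa else Xb)) :
    x = y := by
  set Y : Matrix (Fin 3) (Fin 3) ℝ :=
    if c then (1/5 : ℝ) • !![3, 4, 0; -4, 3, 0; 0, 0, 5]
    else (1/5 : ℝ) • !![5, 0, 0; 0, 3, 4; 0, -4, 3] with hY
  have hXY : (if c then Xa else Xb) * Y = 1 := by
    cases c <;>
      · ext i j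
        fin_cases i <;> fin_cases j <;>
          simp [hY, hXa, hXb, Matrix.mul_apply, Fin.sum_univ_three, Matrix.smul_apply,
            Matrix.vecHead, Matrix.vecTail, Matrix.one_apply] <;> norm_num
  have := congrArg (fun z => Matrix.vecMul z Y) h
  simpa [Matrix.vecMul_vecMul, hXY, Matrix.vecMul_one] using this

lemma int_of_real (Xa Xb : Matrix (Fin 3) (Fin 3) ℝ)
    (hXa : Xa = (1/5 : ℝ) • !![3, -4, 0; 4, 3, 0; 0, 0, 5])
    (hXb : Xb = (1/5 : ℝ) • !![5, 0, 0; 0, 3, -4; 0, 4, 3]) (u v : List Bool)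
    (h : Matrix.vecMul (![3, 0, 4] : Fin 3 → ℝ)
          ((u.map (fun c => if c then Xa else Xb)).prod)
        = Matrix.vecMul (![3, 0, 4] : Fin 3 → ℝ)
          ((v.map (fun c => if c then Xa else Xb)).prod)) :
    ∀ i, 5 ^ v.length * wordN u i = 5 ^ u.length * wordN v i := by
  have hu := real_vecMul Xa Xb hXa hXb u ![3, 0, 4]
  have hv := real_vecMul Xa Xb hXa hXb v ![3, 0, 4]
  have ht : (fun i => ((![3, 0, 4] : Fin 3 → ℤ) i : ℝ)) = (![3, 0, 4] : Fin 3 → ℝ) := by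
    funext i; fin_cases i <;> simp
  rw [ht] at hu hv
  rw [hu, hv] at h
  intro i
  have h2 := congrFun h i
  simp only [Pi.smul_apply, smul_eq_mul] at h2
  have h5 : (5 : ℝ) ≠ 0 := by norm_num
  simp only [div_pow, one_pow, div_mul_eq_mul_div, one_mul] at h2
  have key : ((wordN u i : ℤ) : ℝ) * 5 ^ v.length = ((wordN v i : ℤ) : ℝ) * 5 ^ u.length :=
    (div_eq_div_iff (by positivity) (by positivity)).mp h2
  have key2 : (5 : ℝ) ^ v.length * ((wordN u i : ℤ) : ℝ)
      = (5 : ℝ) ^ u.length * ((wordN v i : ℤ) : ℝ) := by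
    rw [mul_comm, key, mul_comm]
  exact_mod_cast key2

lemma length_lt_absurd (u v : List Bool)
    (hint : ∀ i, 5 ^ v.length * wordN u i = 5 ^ u.length * wordN v i)
    (hlt : u.length < v.length) : False := by
  have h5 : (5 : ℤ) ^ u.length ≠ 0 := pow_ne_zero _ (by norm_num)
  have hsplit : (5 : ℤ) ^ v.length = 5 ^ u.length * 5 ^ (v.length - u.length) := by
    rw [← pow_add]; congr 1; omega
  have hNv : ∀ i, wordN v i = 5 ^ (v.length - u.length) * wordN u i := by
    intro i
    have h2 := hint i
    rw [hsplit, mul_assoc] at h2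
    exact (mul_left_cancel₀ h5 h2).symm
  have hz : ∀ i, mfive v i = 0 := by
    intro i
    have := congrArg (fun z : ℤ => (z : ZMod 5)) (hNv i)
    simp only [mfive] at *
    rw [this]
    push_cast
    rw [show ((5:ZMod 5)) = 0 from rfl, zero_pow (by omega : v.length - u.length ≠ 0)]
    ring
  rcases mfive_ne_zero v with h | h <;> exact h (hz _)

lemma length_eq_and_N_eq (u v : List Bool)
    (hint : ∀ i, 5 ^ v.length * wordN u i = 5 ^ u.length * wordN v i) :
    u.length = v.length ∧ wordN u = wordN v := by
  have hlen : u.length = v.length := by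
    rcases lt_trichotomy u.length v.length with h | h | h
    · exact absurd (length_lt_absurd u v hint h) not_false
    · exact h
    · exact absurd (length_lt_absurd v u (fun i => (hint i).symm) h) not_false
  refine ⟨hlen, funext fun i => ?_⟩
  have h2 := hint i
  rw [hlen] at h2
  exact mul_left_cancel₀ (pow_ne_zero _ (by norm_num : (5:ℤ) ≠ 0)) h2

lemma getLast_eq_of_mfive_eq (u v : List Bool) (h : mfive u = mfive v) :
    u.getLast? = v.getLast? := by
  rcases winv u with ⟨hu, hu0, hu1, hu2⟩ | ⟨hu, hu0, hu1, hu2⟩ | ⟨hu, hu1, hu0, hu2⟩ <;>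
    rcases winv v with ⟨hv, hv0, hv1, hv2⟩ | ⟨hv, hv0, hv1, hv2⟩ | ⟨hv, hv1, hv0, hv2⟩
  · rw [hu, hv]
  · have h2 := congrFun h 2; rw [hu2, hv2] at h2; exact absurd h2 (by decide)
  · have h0 := congrFun h 0; rw [hu0, hv0] at h0; exact absurd h0 (by decide)
  · have h2 := congrFun h 2; rw [hu2, hv2] at h2; exact absurd h2 (by decide)
  · rw [hu, hv]
  · exact absurd (by rw [congrFun h 0, hv0] : mfive u 0 = 0) hu0
  · have h0 := congrFun h 0; rw [hu0, hv0] at h0; exact absurd h0.symm (by decide)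
  · exact absurd (by rw [← congrFun h 0, hu0] : mfive v 0 = 0) hv0
  · rw [hu, hv]

theorem vec_times_word_injective :
    ∀ (Xa Xb : Matrix (Fin 3) (Fin 3) ℝ),
    Xa = (1/5 : ℝ) • !![3, -4, 0; 4, 3, 0; 0, 0, 5] →
    Xb = (1/5 : ℝ) • !![5, 0, 0; 0, 3, -4; 0, 4, 3] →
    ∀ u v : List Bool,  -- `true` stands for letter `a`, `false` for letter `b`
      Matrix.vecMul (![3, 0, 4] : Fin 3 → ℝ)
          ((u.map (fun c => if c then Xa else Xb)).prod)
        = Matrix.vecMul (![3, 0, 4] : Fin 3 → ℝ)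
          ((v.map (fun c => if c then Xa else Xb)).prod) →
      u = v := by
  intro Xa Xb hXa hXb
  suffices key : ∀ n (u v : List Bool), u.length ≤ n →
      Matrix.vecMul (![3, 0, 4] : Fin 3 → ℝ)
          ((u.map (fun c => if c then Xa else Xb)).prod)
        = Matrix.vecMul (![3, 0, 4] : Fin 3 → ℝ)
          ((v.map (fun c => if c then Xa else Xb)).prod) →
      u = v by
    intro u v h
    exact key u.length u v le_rfl h
  intro n
  induction n with
  | zero =>
      intro u v hlen h
      obtain ⟨hl, -⟩ := length_eq_and_N_eq u v (int_of_real Xa Xb hXa hXb u v h)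
      have hu0 : u = [] := List.eq_nil_of_length_eq_zero (Nat.le_zero.mp hlen)
      have hv0 : v = [] := List.eq_nil_of_length_eq_zero (by omega)
      rw [hu0, hv0]
  | succ n ih =>
      intro u v hlen h
      obtain ⟨hl, hN⟩ := length_eq_and_N_eq u v (int_of_real Xa Xb hXa hXb u v h)
      have hm : mfive u = mfive v := by funext i; simp [mfive, hN]
      have hlast := getLast_eq_of_mfive_eq u v hm
      rcases List.eq_nil_or_concat u with hu0 | ⟨u', c, rfl⟩
      · subst hu0
        have : v.length = 0 := by simpa using hl.symm
        rw [List.eq_nil_of_length_eq_zero this]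
      · rcases List.eq_nil_or_concat v with hv0 | ⟨v', d, rfl⟩
        · subst hv0; simp at hl
        · simp only [List.concat_eq_append] at hlen hlast h ⊢
          have hcd : c = d := by
            have h1 : (u' ++ [c]).getLast? = some c := by simp
            have h2 : (v' ++ [d]).getLast? = some d := by simp
            rw [h1, h2] at hlast
            exact Option.some.inj hlast
          subst hcd
          simp only [List.map_append, List.prod_append, List.map_cons, List.map_nil,
            List.prod_cons, List.prod_nil, mul_one, ← Matrix.vecMul_vecMul] at h
          have hstrip := cancel_letter Xa Xb hXa hXb c _ _ h
          have hlen' : u'.length ≤ n := by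
            simp only [List.length_append, List.length_singleton] at hlen
            omega
          rw [ih u' v' hlen' hstrip]
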